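/- Let p_n(x) = Σ_T x^{bor(T)}, summing over left-aligned rook placements T on 2δ_n, where bor(T) is the number of blocks of T containing exactly one rook. Then x^{n/2} · p_n((x+1)/√x) = S_{n+1}(x), where S_{n+1}(x) = Σ_{σ ∈ S_{n+1}} x^{des(σ)} is the (n+1)-st Eulerian polynomial. Equivalently, writing p_n(x) = Σ_k a_{n,k} x^{n-2k}, one has S_{n+1}(x) = Σ_k a_{n,k} x^k (x+1)^{n-2k}. -/

import Mathlib

/-- Rook placements on the double staircase `2δ_n`: one rook per row (row `i`,
numbered from the top starting at `0`, has `2*(i+1)` cells), at most one rook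
per column. -/
abbrev RookPlacement (n : ℕ) :=
  {r : Fin n → Fin (2 * n) //
    Function.Injective r ∧ ∀ i : Fin n, (r i : ℕ) < 2 * (i.val + 1)}

/-- Column `c` (0-indexed) of the rook placement `R` contains a rook. -/
def Occupied {n : ℕ} (R : RookPlacement n) (c : ℕ) : Prop :=
  ∃ j : Fin n, (R.1 j : ℕ) = c

/-- The number of rooks in block `i` of `R` (block `i` consists of the two
columns `2i` and `2i+1`, 0-indexed). -/
def blockRooks {n : ℕ} (R : RookPlacement n) (i : Fin n) : ℕ :=
  (Finset.univ.filter (fun j : Fin n => (R.1 j : ℕ) / 2 = i.val)).card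

/-- `R` is left-aligned: no block has a rook in its right column without a rook
in its left column. -/
def LeftAligned {n : ℕ} (R : RookPlacement n) : Prop :=
  ∀ i : Fin n, Occupied R (2 * i.val + 1) → Occupied R (2 * i.val)

/-- `bor R` is the number of blocks of `R` containing exactly one rook. -/
def bor {n : ℕ} (R : RookPlacement n) : ℕ :=
  (Finset.univ.filter (fun i : Fin n => blockRooks R i = 1)).card

/-- The one-line word of a permutation of `{1, …, m}` extended by the boundary
convention `σ_0 = σ_{m+1} = ⋯ = 0`: `permWord σ i = σ_i` for `1 ≤ i ≤ m`
(values in `{1, …, m}`) and `0` otherwise. -/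
def permWord {m : ℕ} (σ : Equiv.Perm (Fin m)) : ℕ → ℕ := fun i =>
  if h : 1 ≤ i ∧ i ≤ m then (σ ⟨i - 1, by omega⟩).val + 1 else 0

/-- The number of descents of `σ ∈ S_{m}`: positions `1 ≤ i ≤ m - 1` with
`σ_i > σ_{i+1}`. -/
def desCount {m : ℕ} (σ : Equiv.Perm (Fin m)) : ℕ :=
  ((Finset.Icc 1 (m - 1)).filter (fun i => permWord σ (i + 1) < permWord σ i)).card

/-- The number of ascents of `σ ∈ S_{m}`: positions `1 ≤ i ≤ m - 1` with
`σ_i < σ_{i+1}`. -/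
def ascCount {m : ℕ} (σ : Equiv.Perm (Fin m)) : ℕ :=
  ((Finset.Icc 1 (m - 1)).filter (fun i => permWord σ i < permWord σ (i + 1))).card

/-- `σ ∈ S_m` has no double falls: no position `1 ≤ i ≤ m` with
`σ_{i-1} > σ_i > σ_{i+1}` (with the convention `σ_0 = σ_{m+1} = 0`).
Equivalently, every descent of `σ` is a peak. -/
def NoDoubleFall {m : ℕ} (σ : Equiv.Perm (Fin m)) : Prop :=
  ∀ i ∈ Finset.Icc 1 m,
    ¬ (permWord σ i < permWord σ (i - 1) ∧ permWord σ (i + 1) < permWord σ i)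

/-- `σ ∈ S_m` has no double rises: no position `1 ≤ i ≤ m` with
`σ_{i-1} < σ_i < σ_{i+1}` (with the convention `σ_0 = σ_{m+1} = 0`).
Equivalently, every ascent of `σ` is a valley. -/
def NoDoubleRise {m : ℕ} (σ : Equiv.Perm (Fin m)) : Prop :=
  ∀ i ∈ Finset.Icc 1 m,
    ¬ (permWord σ (i - 1) < permWord σ i ∧ permWord σ i < permWord σ (i + 1))

attribute [local instance] Classical.propDecidable

namespace Work
open Finset Equiv

attribute [local instance] Classical.propDecidable

variable {m : ℕ}

lemma permWord_le (σ : Perm (Fin m)) (i : ℕ) : permWord σ i ≤ m := by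
  unfold permWord
  split
  · exact (σ _).isLt
  · omega

lemma permWord_pos (σ : Perm (Fin m)) {i : ℕ} (h1 : 1 ≤ i) (h2 : i ≤ m) :
    1 ≤ permWord σ i := by
  unfold permWord
  rw [dif_pos ⟨h1, h2⟩]
  omega

lemma permWord_eq_zero (σ : Perm (Fin m)) {i : ℕ} (h : ¬ (1 ≤ i ∧ i ≤ m)) :
    permWord σ i = 0 := by
  unfold permWord
  rw [dif_neg h]

/-- insertion of the maximum value at position `p` (0-indexed) -/
def insFun (σ : Perm (Fin m)) (p : Fin (m+1)) : Fin (m+1) → Fin (m+1) := fun j =>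
  if h : (j : ℕ) < p.val then Fin.castSucc (σ ⟨j, by have := p.isLt; omega⟩)
  else if h2 : (j : ℕ) = p.val then Fin.last m
  else Fin.castSucc (σ ⟨(j:ℕ) - 1, by have := j.isLt; omega⟩)

lemma insFun_injective (σ : Perm (Fin m)) (p : Fin (m+1)) :
    Function.Injective (insFun σ p) := by
  intro a b hab
  unfold insFun at hab
  have ha := a.isLt
  have hb := b.isLt
  have hlast : ∀ x : Fin m, Fin.castSucc x ≠ Fin.last m :=
    fun x => ne_of_lt (Fin.castSucc_lt_last x)
  apply Fin.ext
  split_ifs at hab with h1 h2 h3 h3 h4 h5 h5 h6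
  all_goals first
    | (exact absurd hab (hlast _))
    | (exact absurd hab.symm (hlast _))
    | omega
    | (have h := congrArg Fin.val (σ.injective (Fin.castSucc_injective m hab))
       simp only at h
       omega)
/-- the inserted permutation, as an `Equiv.Perm`. -/
noncomputable def insPerm (σ : Perm (Fin m)) (p : Fin (m+1)) : Perm (Fin (m+1)) :=
  Equiv.ofBijective (insFun σ p) (Finite.injective_iff_bijective.mp (insFun_injective σ p))

lemma insPerm_apply (σ : Perm (Fin m)) (p : Fin (m+1)) (j : Fin (m+1)) :
    insPerm σ p j = insFun σ p j := rfl

lemma permWord_insPerm (σ : Perm (Fin m)) (p : Fin (m+1)) (i : ℕ) :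
    permWord (insPerm σ p) i =
      if i = p.val + 1 then m + 1
      else if i ≤ p.val then permWord σ i else permWord σ (i - 1) := by
  have hp := p.isLt
  by_cases hi : 1 ≤ i ∧ i ≤ m + 1
  · have : permWord (insPerm σ p) i = (insFun σ p ⟨i - 1, by omega⟩).val + 1 := by
      unfold permWord
      rw [dif_pos hi]
      rfl
    rw [this]
    unfold insFun
    simp only [Fin.val_mk]
    rcases lt_trichotomy (i - 1) p.val with h | h | h
    · rw [dif_pos h, if_neg (show ¬ (i = p.val + 1) by omega),
        if_pos (show i ≤ p.val by omega)]
      unfold permWord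
      rw [dif_pos (show 1 ≤ i ∧ i ≤ m by omega)]
      simp only [Fin.coe_castSucc]
    · rw [dif_neg (show ¬ (i - 1 < p.val) by omega), dif_pos h,
        if_pos (show i = p.val + 1 by omega)]
      simp [Fin.val_last]
    · rw [dif_neg (show ¬ (i - 1 < p.val) by omega),
        dif_neg (show ¬ (i - 1 = p.val) by omega),
        if_neg (show ¬ (i = p.val + 1) by omega),
        if_neg (show ¬ (i ≤ p.val) by omega)]
      conv_rhs => unfold permWord
      rw [dif_pos (show 1 ≤ i - 1 ∧ i - 1 ≤ m by omega)]
      simp only [Fin.coe_castSucc]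
  · rcases Nat.eq_zero_or_pos i with h0 | h0
    · subst h0
      rw [permWord_eq_zero _ hi, if_neg (show ¬ (0 = p.val + 1) by omega),
        if_pos (Nat.zero_le _), permWord_eq_zero _ (by omega)]
    · rw [permWord_eq_zero _ hi, if_neg (show ¬ (i = p.val + 1) by omega),
        if_neg (show ¬ (i ≤ p.val) by omega), permWord_eq_zero _ (by omega)]
/-- descent predicate -/
def dsc (σ : Perm (Fin m)) (i : ℕ) : Prop := permWord σ (i + 1) < permWord σ i

lemma dsc_zero (σ : Perm (Fin m)) : ¬ dsc σ 0 := by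
  unfold dsc
  rw [permWord_eq_zero σ (i := 0) (by omega)]
  omega

lemma desCount_def (σ : Perm (Fin m)) :
    desCount σ = ((Finset.Icc 1 (m - 1)).filter (dsc σ)).card := by
  unfold desCount dsc
  congr 1
  ext i
  simp only [Finset.mem_filter]

lemma not_dsc_insPerm_p (σ : Perm (Fin m)) (p : Fin (m+1)) : ¬ dsc (insPerm σ p) p.val := by
  unfold dsc
  rw [permWord_insPerm, permWord_insPerm]
  rw [if_pos rfl, if_neg (by omega), if_pos (le_refl _)]
  have := permWord_le σ p.val
  omega

lemma dsc_insPerm_succ_p (σ : Perm (Fin m)) (p : Fin (m+1)) : dsc (insPerm σ p) (p.val + 1) := by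
  unfold dsc
  rw [permWord_insPerm, permWord_insPerm]
  rw [if_pos rfl, if_neg (by omega), if_neg (by omega)]
  have := permWord_le σ (p.val + 1 + 1 - 1)
  omega

lemma dsc_insPerm_lt (σ : Perm (Fin m)) (p : Fin (m+1)) {i : ℕ} (h : i + 1 ≤ p.val) :
    dsc (insPerm σ p) i ↔ dsc σ i := by
  unfold dsc
  rw [permWord_insPerm, permWord_insPerm]
  rw [if_neg (by omega), if_pos (by omega), if_neg (by omega), if_pos (by omega)]

lemma dsc_insPerm_gt (σ : Perm (Fin m)) (p : Fin (m+1)) {i : ℕ} (h : p.val + 2 ≤ i) :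
    dsc (insPerm σ p) i ↔ dsc σ (i - 1) := by
  unfold dsc
  rw [permWord_insPerm, permWord_insPerm]
  rw [if_neg (by omega), if_neg (by omega), if_neg (by omega), if_neg (by omega)]
  have : i + 1 - 1 = i - 1 + 1 := by omega
  rw [this]

lemma desCount_insPerm (σ : Perm (Fin m)) (p : Fin (m+1)) :
    desCount (insPerm σ p) =
      if dsc σ p.val ∨ p.val = m then desCount σ else desCount σ + 1 := by
  have hp := p.isLt
  rcases eq_or_lt_of_le (Nat.lt_succ_iff.mp hp) with hpm | hpm
  · -- p.val = m
    rw [if_pos (Or.inr hpm)]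
    rw [desCount_def, desCount_def]
    congr 1
    ext i
    simp only [Finset.mem_filter, Finset.mem_Icc]
    constructor
    · rintro ⟨⟨h1, h2⟩, hd⟩
      rcases eq_or_lt_of_le h2 with rfl | hlt
      · have hnd := not_dsc_insPerm_p σ p
        rw [hpm] at hnd
        exact absurd hd hnd
      · have : i + 1 ≤ p.val := by omega
        exact ⟨⟨h1, by omega⟩, (dsc_insPerm_lt σ p this).mp hd⟩
    · rintro ⟨⟨h1, h2⟩, hd⟩
      have hm1 : 1 ≤ m := by omega
      exact ⟨⟨h1, by omega⟩, (dsc_insPerm_lt σ p (by omega)).mpr hd⟩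
  · -- p.val < m
    have hcard : ((Finset.Icc 1 m).filter (dsc (insPerm σ p))).card =
        (insert p.val ((Finset.Icc 1 (m-1)).filter (dsc σ))).card := by
      apply Finset.card_nbij' (fun i => if i ≤ p.val then i else i - 1)
        (fun j => if j < p.val then j else j + 1)
      · intro i hi
        simp only [Finset.mem_coe, Finset.mem_filter, Finset.mem_Icc] at hi
        obtain ⟨⟨h1, h2⟩, hd⟩ := hi
        have hne : i ≠ p.val := fun h => (not_dsc_insPerm_p σ p) (h ▸ hd)
        simp only [Finset.mem_coe, Finset.mem_insert, Finset.mem_filter, Finset.mem_Icc]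
        rcases lt_trichotomy i p.val with h | h | h
        · rw [if_pos (le_of_lt h)]
          exact Or.inr ⟨⟨h1, by omega⟩, (dsc_insPerm_lt σ p (by omega)).mp hd⟩
        · exact absurd h hne
        · rw [if_neg (by omega)]
          rcases eq_or_lt_of_le (Nat.succ_le_of_lt h) with h' | h'
          · exact Or.inl (by omega)
          · exact Or.inr ⟨⟨by omega, by omega⟩, (dsc_insPerm_gt σ p (by omega)).mp hd⟩
      · intro j hj
        simp only [Finset.mem_coe, Finset.mem_insert, Finset.mem_filter, Finset.mem_Icc] at hj
        simp only [Finset.mem_coe, Finset.mem_filter, Finset.mem_Icc]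
        rcases hj with rfl | ⟨⟨h1, h2⟩, hd⟩
        · rw [if_neg (lt_irrefl _)]
          exact ⟨⟨by omega, by omega⟩, dsc_insPerm_succ_p σ p⟩
        · by_cases h : j < p.val
          · rw [if_pos h]
            exact ⟨⟨h1, by omega⟩, (dsc_insPerm_lt σ p (by omega)).mpr hd⟩
          · rw [if_neg h]
            rcases eq_or_lt_of_le (le_of_not_gt h) with h' | h'
            · subst h'
              exact ⟨⟨by omega, by omega⟩, dsc_insPerm_succ_p σ p⟩
            · exact ⟨⟨by omega, by omega⟩, by
                rw [dsc_insPerm_gt σ p (by omega)]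
                simpa using hd⟩
      · intro i hi
        simp only [Finset.mem_coe, Finset.mem_filter, Finset.mem_Icc] at hi
        dsimp only
        have hne : i ≠ p.val := fun h => (not_dsc_insPerm_p σ p) (h ▸ hi.2)
        rcases lt_trichotomy i p.val with h | h | h
        · rw [if_pos (le_of_lt h), if_pos h]
        · exact absurd h hne
        · rw [if_neg (show ¬ i ≤ p.val by omega), if_neg (show ¬ i - 1 < p.val by omega)]
          omega
      · intro j hj
        simp only [Finset.mem_coe, Finset.mem_insert, Finset.mem_filter, Finset.mem_Icc] at hj
        dsimp only
        by_cases h : j < p.val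
        · rw [if_pos h, if_pos (le_of_lt h)]
        · rw [if_neg h, if_neg (show ¬ j + 1 ≤ p.val by omega)]
          omega
    rw [desCount_def, show m + 1 - 1 = m from rfl, hcard]
    by_cases hd : dsc σ p.val
    · rw [if_pos (Or.inl hd)]
      have hp1 : 1 ≤ p.val := by
        by_contra h
        exact dsc_zero σ (by simpa [show p.val = 0 by omega] using hd)
      rw [Finset.insert_eq_self.mpr (by
        simp only [Finset.mem_filter, Finset.mem_Icc]
        exact ⟨⟨hp1, by omega⟩, hd⟩)]
      exact (desCount_def σ).symm
    · rw [if_neg (by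
        push_neg
        exact ⟨hd, by omega⟩)]
      rw [Finset.card_insert_of_notMem (by
        simp only [Finset.mem_filter, Finset.mem_Icc]
        tauto)]
      rw [desCount_def]
lemma insFun_lt (σ : Perm (Fin m)) (p : Fin (m+1)) {j : Fin (m+1)} (h : j.val < p.val) :
    insFun σ p j = Fin.castSucc (σ ⟨j.val, by have := p.isLt; omega⟩) := by
  unfold insFun
  rw [dif_pos h]

lemma insFun_gt (σ : Perm (Fin m)) (p : Fin (m+1)) {j : Fin (m+1)} (h : p.val < j.val) :
    insFun σ p j = Fin.castSucc (σ ⟨j.val - 1, by have := j.isLt; omega⟩) := by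
  unfold insFun
  rw [dif_neg (by omega), dif_neg (by omega)]

lemma insFun_eq (σ : Perm (Fin m)) (p : Fin (m+1)) : insFun σ p p = Fin.last m := by
  unfold insFun
  rw [dif_neg (lt_irrefl _), dif_pos rfl]

lemma insPair_injective :
    Function.Injective (fun z : Perm (Fin m) × Fin (m+1) => insPerm z.1 z.2) := by
  rintro ⟨σ, p⟩ ⟨σ', p'⟩ h
  simp only at h
  have happ : ∀ j, insFun σ p j = insFun σ' p' j := fun j => by
    rw [← insPerm_apply, ← insPerm_apply, h]
  have hpp' : p = p' := by
    by_contra hne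
    have hne' : p.val ≠ p'.val := fun hv => hne (Fin.ext hv)
    have h1 : insFun σ p p = Fin.last m := insFun_eq σ p
    have h2 : insFun σ' p' p ≠ Fin.last m := by
      rcases lt_or_gt_of_ne hne' with hlt | hgt
      · rw [insFun_lt σ' p' hlt]
        exact ne_of_lt (Fin.castSucc_lt_last _)
      · rw [insFun_gt σ' p' hgt]
        exact ne_of_lt (Fin.castSucc_lt_last _)
    exact h2 ((happ p).symm.trans h1)
  subst hpp'
  have hσ : σ = σ' := by
    apply Equiv.ext
    intro i
    have hi := i.isLt
    have hp := p.isLt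
    by_cases hc : i.val < p.val
    · have hkey := happ ⟨i.val, by omega⟩
      rw [insFun_lt σ p (by simpa using hc), insFun_lt σ' p (by simpa using hc)] at hkey
      have h3 := Fin.castSucc_injective m hkey
      simp only [Fin.val_mk, Fin.eta] at h3
      exact h3
    · have hkey := happ ⟨i.val + 1, by omega⟩
      rw [insFun_gt σ p (by simp; omega), insFun_gt σ' p (by simp; omega)] at hkey
      have h3 := Fin.castSucc_injective m hkey
      simp only [Fin.val_mk, Nat.add_sub_cancel, Fin.eta] at h3
      exact h3
  rw [hσ]

lemma insPair_bijective :
    Function.Bijective (fun z : Perm (Fin m) × Fin (m+1) => insPerm z.1 z.2) := by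
  rw [Fintype.bijective_iff_injective_and_card]
  refine ⟨insPair_injective, ?_⟩
  rw [Fintype.card_prod, Fintype.card_perm, Fintype.card_perm, Fintype.card_fin,
    Fintype.card_fin, Nat.factorial_succ, mul_comm]

lemma card_pres (σ : Perm (Fin m)) (hm : 1 ≤ m) :
    (Finset.univ.filter fun p : Fin (m+1) => dsc σ p.val ∨ p.val = m).card
      = desCount σ + 1 := by
  have h1 : (insert m ((Finset.Icc 1 (m-1)).filter (dsc σ))).card = desCount σ + 1 := by
    rw [Finset.card_insert_of_notMem (by
      simp only [Finset.mem_filter, Finset.mem_Icc]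
      omega), desCount_def]
  rw [← h1]
  apply Finset.card_bij (fun p _ => p.val)
  · intro p hp
    simp only [Finset.mem_filter, Finset.mem_univ, true_and] at hp
    simp only [Finset.mem_insert, Finset.mem_filter, Finset.mem_Icc]
    rcases hp with hd | he
    · rcases eq_or_ne p.val m with he | hne
      · exact Or.inl he
      · have hp1 : 1 ≤ p.val := by
          rcases Nat.eq_zero_or_pos p.val with h0 | h0
          · exact absurd (h0 ▸ hd) (dsc_zero σ)
          · exact h0
        have := p.isLt
        exact Or.inr ⟨⟨hp1, by omega⟩, hd⟩
    · exact Or.inl he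
  · intro p _ q _ h
    exact Fin.ext h
  · intro j hj
    simp only [Finset.mem_insert, Finset.mem_filter, Finset.mem_Icc] at hj
    rcases hj with hj | ⟨⟨h1, h2⟩, hd⟩
    · refine ⟨⟨j, by omega⟩, ?_, rfl⟩
      simp only [Finset.mem_filter, Finset.mem_univ, true_and, Fin.val_mk]
      exact Or.inr hj
    · refine ⟨⟨j, by omega⟩, ?_, rfl⟩
      simp only [Finset.mem_filter, Finset.mem_univ, true_and, Fin.val_mk]
      exact Or.inl hd

/-- number of permutations of `S m` with given descent count -/
noncomputable def cntP (m t : ℕ) : ℕ :=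
  (Finset.univ.filter fun σ : Perm (Fin m) => desCount σ = t).card

lemma desCount_le (σ : Perm (Fin m)) : desCount σ ≤ m - 1 := by
  rw [desCount_def]
  calc ((Finset.Icc 1 (m-1)).filter (dsc σ)).card ≤ (Finset.Icc 1 (m-1)).card :=
        Finset.card_filter_le _ _
  _ = m - 1 := by rw [Nat.card_Icc]; omega

lemma cntP_succ (m : ℕ) (hm : 1 ≤ m) (t : ℕ) :
    cntP (m+1) t = ∑ σ : Perm (Fin m),
      ((if desCount σ = t then desCount σ + 1 else 0)
        + (if desCount σ + 1 = t then m - desCount σ else 0)) := by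
  unfold cntP
  rw [Finset.card_filter]
  rw [← Fintype.sum_bijective _ insPair_bijective
    (fun z => if desCount (insPerm z.1 z.2) = t then 1 else 0)
    (fun τ => if desCount τ = t then 1 else 0) (fun z => rfl)]
  rw [Fintype.sum_prod_type]
  apply Finset.sum_congr rfl
  intro σ _
  have hsplit : ∀ p : Fin (m+1),
      (if desCount (insPerm σ p) = t then (1:ℕ) else 0) =
      (if dsc σ p.val ∨ p.val = m then (if desCount σ = t then (1:ℕ) else 0)
        else (if desCount σ + 1 = t then (1:ℕ) else 0)) := by
    intro p
    rw [desCount_insPerm]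
    by_cases h : dsc σ p.val ∨ p.val = m
    · rw [if_pos h, if_pos h]
    · rw [if_neg h, if_neg h]
  rw [Finset.sum_congr rfl (fun p _ => hsplit p)]
  rw [Finset.sum_ite, Finset.sum_const, Finset.sum_const, smul_eq_mul, smul_eq_mul]
  rw [card_pres σ hm, Finset.filter_not, Finset.card_sdiff_of_subset (Finset.filter_subset _ _),
    card_pres σ hm, Finset.card_univ, Fintype.card_fin]
  have hd : desCount σ ≤ m - 1 := desCount_le σ
  by_cases h1 : desCount σ = t
  · rw [if_pos h1, if_pos h1]
    have h2 : ¬ (desCount σ + 1 = t) := by omega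
    rw [if_neg h2, if_neg h2]
    omega
  · rw [if_neg h1, if_neg h1]
    by_cases h2 : desCount σ + 1 = t
    · rw [if_pos h2, if_pos h2]
      omega
    · rw [if_neg h2, if_neg h2]
      omega
/-- number of rooks in odd columns -/
noncomputable def oddC {n : ℕ} (R : RookPlacement n) : ℕ :=
  (Finset.univ.filter fun j : Fin n => (R.1 j).val % 2 = 1).card

noncomputable def cntR (n t : ℕ) : ℕ :=
  (Finset.univ.filter fun R : RookPlacement n => oddC R = t).card

lemma oddC_le {n : ℕ} (R : RookPlacement n) : oddC R ≤ n := by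
  unfold oddC
  calc _ ≤ (Finset.univ : Finset (Fin n)).card := Finset.card_filter_le _ _
  _ = n := by simp

/-- restriction of a placement to the first n rows -/
def res {n : ℕ} (R : RookPlacement (n+1)) : RookPlacement n :=
  ⟨fun i => ⟨(R.1 i.castSucc).val, by
      have h1 := R.2.2 i.castSucc
      have h2 := i.isLt
      simp only [Fin.coe_castSucc] at h1
      omega⟩,
   by
     intro a b hab
     have h : R.1 a.castSucc = R.1 b.castSucc := Fin.ext (by
       simpa using congrArg Fin.val hab)
     exact Fin.castSucc_injective n (R.2.1 h),
   fun i => by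
     have := R.2.2 i.castSucc
     simpa using this⟩

@[simp] lemma res_apply {n : ℕ} (R : RookPlacement (n+1)) (i : Fin n) :
    ((res R).1 i).val = (R.1 i.castSucc).val := rfl

/-- extension of a placement by a rook in the last row -/
def ext1 {n : ℕ} (R' : RookPlacement n) (c : Fin (2*(n+1)))
    (hc : ∀ j : Fin n, (R'.1 j).val ≠ c.val) : RookPlacement (n+1) :=
  ⟨fun i => if h : i.val < n
      then ⟨(R'.1 ⟨i.val, h⟩).val, by have := (R'.1 ⟨i.val, h⟩).isLt; omega⟩
      else c,
   by
     intro a b hab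
     dsimp only at hab
     have ha := a.isLt
     have hb := b.isLt
     by_cases h1 : a.val < n <;> by_cases h2 : b.val < n
     · rw [dif_pos h1, dif_pos h2] at hab
       have h3 : R'.1 ⟨a.val, h1⟩ = R'.1 ⟨b.val, h2⟩ := Fin.ext (by
         simpa using congrArg Fin.val hab)
       have := congrArg Fin.val (R'.2.1 h3)
       simp only [Fin.val_mk] at this
       exact Fin.ext this
     · rw [dif_pos h1, dif_neg h2] at hab
       exact absurd (by simpa using congrArg Fin.val hab) (hc ⟨a.val, h1⟩)
     · rw [dif_neg h1, dif_pos h2] at hab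
       exact absurd (by simpa using (congrArg Fin.val hab).symm) (hc ⟨b.val, h2⟩)
     · exact Fin.ext (by omega)
   ,
   fun i => by
     dsimp only
     by_cases h : i.val < n
     · rw [dif_pos h]
       have := R'.2.2 ⟨i.val, h⟩
       simpa using this
     · rw [dif_neg h]
       have := i.isLt
       have := c.isLt
       omega⟩

lemma res_ext1 {n : ℕ} (R' : RookPlacement n) (c : Fin (2*(n+1)))
    (hc : ∀ j : Fin n, (R'.1 j).val ≠ c.val) : res (ext1 R' c hc) = R' := by
  apply Subtype.ext
  funext i
  apply Fin.ext
  have hi := i.isLt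
  rw [res_apply]
  show ((ext1 R' c hc).1 i.castSucc).val = _
  unfold ext1
  simp only
  rw [dif_pos (show (i.castSucc).val < n by simpa using hi)]
  simp [Fin.eta]

lemma ext1_last {n : ℕ} (R' : RookPlacement n) (c : Fin (2*(n+1)))
    (hc : ∀ j : Fin n, (R'.1 j).val ≠ c.val) :
    (ext1 R' c hc).1 (Fin.last n) = c := by
  unfold ext1
  simp only
  rw [dif_neg (by simp)]

lemma free_res {n : ℕ} (R : RookPlacement (n+1)) (j : Fin n) :
    ((res R).1 j).val ≠ (R.1 (Fin.last n)).val := by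
  intro h
  rw [res_apply] at h
  have : R.1 j.castSucc = R.1 (Fin.last n) := Fin.ext h
  have := R.2.1 this
  exact absurd (congrArg Fin.val this) (by simp; omega)

lemma ext1_res {n : ℕ} (R : RookPlacement (n+1)) :
    ext1 (res R) (R.1 (Fin.last n)) (free_res R) = R := by
  apply Subtype.ext
  funext i
  have hi := i.isLt
  unfold ext1
  simp only
  by_cases h : i.val < n
  · rw [dif_pos h]
    have he : (⟨i.val, h⟩ : Fin n).castSucc = i := Fin.ext (by simp)
    apply Fin.ext
    rw [Fin.val_mk, res_apply, he]
  · rw [dif_neg h]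
    have he : Fin.last n = i := Fin.ext (by rw [Fin.val_last]; omega)
    rw [he]

lemma oddC_split {n : ℕ} (R : RookPlacement (n+1)) :
    oddC R = oddC (res R) + (R.1 (Fin.last n)).val % 2 := by
  unfold oddC
  rw [Finset.card_filter, Finset.card_filter, Fin.sum_univ_castSucc]
  have h1 : ∀ i : Fin n, (if ((R.1 i.castSucc)).val % 2 = 1 then (1:ℕ) else 0)
      = (if ((res R).1 i).val % 2 = 1 then (1:ℕ) else 0) := fun i => by rw [res_apply]
  rw [Finset.sum_congr rfl (fun i _ => h1 i)]
  congr 1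
  by_cases h : (R.1 (Fin.last n)).val % 2 = 1
  · rw [if_pos h, h]
  · rw [if_neg h]
    omega
lemma card_cols_par (N b : ℕ) (hb : b < 2) :
    (Finset.univ.filter fun c : Fin (2*N) => c.val % 2 = b).card = N := by
  have hN : N = (Finset.univ : Finset (Fin N)).card := by simp
  rw [hN]
  apply Finset.card_bij (fun c _ => (⟨c.val / 2, by have := c.isLt; omega⟩ : Fin N))
  · intro c hc
    exact Finset.mem_univ _
  · intro c1 h1 c2 h2 h
    simp only [Finset.mem_filter, Finset.mem_univ, true_and] at h1 h2
    have := congrArg Fin.val h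
    simp only [Fin.val_mk] at this
    exact Fin.ext (by omega)
  · intro k _
    refine ⟨⟨2*k.val + b, by have := k.isLt; omega⟩, ?_, ?_⟩
    · simp only [Finset.mem_filter, Finset.mem_univ, true_and, Fin.val_mk]
      omega
    · exact Fin.ext (by simp only [Fin.val_mk]; omega)

lemma card_occ_par {n : ℕ} (R' : RookPlacement n) (b : ℕ) :
    (Finset.univ.filter fun c : Fin (2*(n+1)) =>
        c.val % 2 = b ∧ ∃ j : Fin n, (R'.1 j).val = c.val).card
      = (Finset.univ.filter fun j : Fin n => (R'.1 j).val % 2 = b).card := by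
  symm
  apply Finset.card_bij (fun j _ => (⟨(R'.1 j).val, by have := (R'.1 j).isLt; omega⟩ :
    Fin (2*(n+1))))
  · intro j hj
    simp only [Finset.mem_filter, Finset.mem_univ, true_and, Fin.val_mk] at hj ⊢
    exact ⟨hj, j, rfl⟩
  · intro j1 h1 j2 h2 h
    have := congrArg Fin.val h
    simp only [Fin.val_mk] at this
    exact R'.2.1 (Fin.ext this)
  · intro c hc
    simp only [Finset.mem_filter, Finset.mem_univ, true_and] at hc
    obtain ⟨hpar, j, hj⟩ := hc
    refine ⟨j, ?_, ?_⟩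
    · simp only [Finset.mem_filter, Finset.mem_univ, true_and]
      rw [hj]
      exact hpar
    · exact Fin.ext (by simp only [Fin.val_mk]; exact hj)

lemma card_rows_even {n : ℕ} (R' : RookPlacement n) :
    (Finset.univ.filter fun j : Fin n => (R'.1 j).val % 2 = 0).card = n - oddC R' := by
  have h := Finset.card_filter_add_card_filter_not
    (s := (Finset.univ : Finset (Fin n))) (p := fun j => (R'.1 j).val % 2 = 1)
  have he : (Finset.univ.filter fun j : Fin n => ¬ (R'.1 j).val % 2 = 1)
      = (Finset.univ.filter fun j : Fin n => (R'.1 j).val % 2 = 0) := by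
    ext j
    simp only [Finset.mem_filter, Finset.mem_univ, true_and]
    omega
  rw [he] at h
  have : oddC R' ≤ n := oddC_le R'
  unfold oddC at *
  simp only [Finset.card_univ, Fintype.card_fin] at h
  omega

lemma card_free_par {n : ℕ} (R' : RookPlacement n) (b : ℕ) (hb : b < 2) :
    (Finset.univ.filter fun c : Fin (2*(n+1)) =>
        c.val % 2 = b ∧ ∀ j : Fin n, (R'.1 j).val ≠ c.val).card
      = (n + 1) - (Finset.univ.filter fun j : Fin n => (R'.1 j).val % 2 = b).card := by
  have h := Finset.card_filter_add_card_filter_not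
    (s := (Finset.univ.filter fun c : Fin (2*(n+1)) => c.val % 2 = b))
    (p := fun c => ∀ j : Fin n, (R'.1 j).val ≠ c.val)
  rw [Finset.filter_filter, Finset.filter_filter, card_cols_par (n+1) b hb] at h
  have he : (Finset.univ.filter fun c : Fin (2*(n+1)) =>
      c.val % 2 = b ∧ ¬ ∀ j : Fin n, (R'.1 j).val ≠ c.val)
      = (Finset.univ.filter fun c : Fin (2*(n+1)) =>
      c.val % 2 = b ∧ ∃ j : Fin n, (R'.1 j).val = c.val) := by
    ext c
    simp only [Finset.mem_filter, Finset.mem_univ, true_and, not_forall, not_not, ne_eq]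
  rw [he, card_occ_par] at h
  have hle : (Finset.univ.filter fun j : Fin n => (R'.1 j).val % 2 = b).card ≤ n := by
    calc _ ≤ (Finset.univ : Finset (Fin n)).card := Finset.card_filter_le _ _
    _ = n := by simp
  omega

lemma ext1_congr {n : ℕ} {A B : RookPlacement n} {c d : Fin (2*(n+1))}
    {hA : ∀ j : Fin n, (A.1 j).val ≠ c.val} {hB : ∀ j : Fin n, (B.1 j).val ≠ d.val}
    (h1 : A = B) (h2 : c = d) : ext1 A c hA = ext1 B d hB := by
  subst h1; subst h2; rfl

set_option maxHeartbeats 1000000 in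
lemma cntR_succ (n t : ℕ) :
    cntR (n+1) t = ∑ R' : RookPlacement n,
      ((if oddC R' = t then oddC R' + 1 else 0)
        + (if oddC R' + 1 = t then (n+1) - oddC R' else 0)) := by
  unfold cntR
  rw [Finset.card_eq_sum_card_fiberwise
    (f := res) (t := Finset.univ) (fun x _ => Finset.mem_univ (res x))]
  apply Finset.sum_congr rfl
  intro R' _
  have hbij : (((Finset.univ.filter fun R : RookPlacement (n+1) => oddC R = t)).filter
      (fun R => res R = R')).card
      = (Finset.univ.filter fun c : Fin (2*(n+1)) =>
          (∀ j : Fin n, (R'.1 j).val ≠ c.val) ∧ oddC R' + c.val % 2 = t).card := by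
    apply Finset.card_bij (fun R _ => R.1 (Fin.last n))
    · intro R hR
      simp only [Finset.mem_filter, Finset.mem_univ, true_and] at hR ⊢
      obtain ⟨hodd, hres⟩ := hR
      constructor
      · intro j
        have hf := free_res R j
        rw [hres] at hf
        exact hf
      · rw [← hres]
        have := oddC_split R
        omega
    · intro R1 h1 R2 h2 h
      simp only [Finset.mem_filter, Finset.mem_univ, true_and] at h1 h2
      rw [← ext1_res R1, ← ext1_res R2]
      exact ext1_congr (by rw [h1.2, h2.2]) h
    · intro c hc
      simp only [Finset.mem_filter, Finset.mem_univ, true_and] at hc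
      obtain ⟨hfree, hpar⟩ := hc
      refine ⟨ext1 R' c hfree, ?_, ext1_last R' c hfree⟩
      simp only [Finset.mem_filter, Finset.mem_univ, true_and]
      refine ⟨?_, res_ext1 R' c hfree⟩
      rw [oddC_split (ext1 R' c hfree), res_ext1, ext1_last]
      exact hpar
  rw [hbij]
  have hle : oddC R' ≤ n := oddC_le R'
  by_cases h1 : oddC R' = t
  · have he : (Finset.univ.filter fun c : Fin (2*(n+1)) =>
        (∀ j : Fin n, (R'.1 j).val ≠ c.val) ∧ oddC R' + c.val % 2 = t)
        = (Finset.univ.filter fun c : Fin (2*(n+1)) =>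
        c.val % 2 = 0 ∧ ∀ j : Fin n, (R'.1 j).val ≠ c.val) := by
      ext c
      simp only [Finset.mem_filter, Finset.mem_univ, true_and]
      constructor
      · rintro ⟨ha, hb⟩; exact ⟨by omega, ha⟩
      · rintro ⟨ha, hb⟩; exact ⟨hb, by omega⟩
    rw [he, card_free_par R' 0 (by omega), card_rows_even R']
    rw [if_pos h1, if_neg (by omega)]
    omega
  · by_cases h2 : oddC R' + 1 = t
    · have he : (Finset.univ.filter fun c : Fin (2*(n+1)) =>
          (∀ j : Fin n, (R'.1 j).val ≠ c.val) ∧ oddC R' + c.val % 2 = t)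
          = (Finset.univ.filter fun c : Fin (2*(n+1)) =>
          c.val % 2 = 1 ∧ ∀ j : Fin n, (R'.1 j).val ≠ c.val) := by
        ext c
        simp only [Finset.mem_filter, Finset.mem_univ, true_and]
        constructor
        · rintro ⟨ha, hb⟩; exact ⟨by omega, ha⟩
        · rintro ⟨ha, hb⟩; exact ⟨hb, by omega⟩
      rw [he, card_free_par R' 1 (by omega)]
      rw [if_neg h1, if_pos h2]
      unfold oddC
      omega
    · have he : (Finset.univ.filter fun c : Fin (2*(n+1)) =>
          (∀ j : Fin n, (R'.1 j).val ≠ c.val) ∧ oddC R' + c.val % 2 = t) = ∅ := by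
        apply Finset.filter_eq_empty_iff.mpr
        intro c _
        rintro ⟨ha, hb⟩
        have : c.val % 2 < 2 := by omega
        omega
      rw [he, if_neg h1, if_neg h2]
      simp
lemma sum_stat {α M : Type*} [Fintype α] [AddCommMonoid M] (stat : α → ℕ) (B : ℕ)
    (hB : ∀ a, stat a ≤ B) (g : ℕ → M) :
    ∑ a : α, g (stat a)
      = ∑ s ∈ Finset.range (B+1),
          (Finset.univ.filter fun a => stat a = s).card • g s := by
  rw [Finset.sum_comp]
  apply Finset.sum_subset
  · intro s hs
    rw [Finset.mem_image] at hs
    obtain ⟨a, _, rfl⟩ := hs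
    rw [Finset.mem_range]
    exact Nat.lt_succ_of_le (hB a)
  · intro s _ hs
    rw [Finset.filter_eq_empty_iff.mpr, Finset.card_empty, zero_smul]
    intro a _
    intro he
    exact hs (Finset.mem_image.mpr ⟨a, Finset.mem_univ a, he⟩)

instance rp0 : Fintype (RookPlacement 0) := by infer_instance

lemma card_rp0 : Fintype.card (RookPlacement 0) = 1 := by
  rw [Fintype.card_eq_one_iff]
  refine ⟨⟨fun i => i, fun a b h => h, fun i => i.elim0⟩, ?_⟩
  intro b
  apply Subtype.ext
  funext i
  exact i.elim0

lemma oddC_rp0 (R : RookPlacement 0) : oddC R = 0 := by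
  unfold oddC
  simp

lemma desCount_perm1 (σ : Perm (Fin 1)) : desCount σ = 0 := by
  rw [desCount_def]
  simp

lemma main_count : ∀ n t, cntR n t = cntP (n+1) t := by
  intro n
  induction n with
  | zero =>
    intro t
    unfold cntR cntP
    by_cases ht : t = 0
    · subst ht
      rw [Finset.filter_true_of_mem (fun R _ => oddC_rp0 R),
        Finset.filter_true_of_mem (fun σ _ => desCount_perm1 σ),
        Finset.card_univ, Finset.card_univ, card_rp0, Fintype.card_perm]
      simp
    · rw [Finset.filter_eq_empty_iff.mpr (fun R _ => by rw [oddC_rp0 R]; exact fun h => ht h.symm),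
        Finset.filter_eq_empty_iff.mpr (fun σ _ => by rw [desCount_perm1 σ]; exact fun h => ht h.symm)]
      rfl
  | succ n ih =>
    intro t
    rw [cntR_succ n t, cntP_succ (n+1) (by omega) t]
    rw [sum_stat oddC n oddC_le
      (fun s => ((if s = t then s + 1 else 0) + (if s + 1 = t then (n+1) - s else 0)))]
    rw [sum_stat desCount n (fun σ => by have := desCount_le σ; omega)
      (fun s => ((if s = t then s + 1 else 0) + (if s + 1 = t then (n+1) - s else 0)))]
    apply Finset.sum_congr rfl
    intro s _
    have hc := ih s
    unfold cntR cntP at hc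
    rw [hc]

lemma G3 {M : Type*} [CommSemiring M] (n : ℕ) (u : M) :
    ∑ R : RookPlacement n, u ^ oddC R = ∑ σ : Perm (Fin (n+1)), u ^ desCount σ := by
  rw [sum_stat oddC n oddC_le (fun s => u ^ s),
      sum_stat desCount n (fun σ => by have := desCount_le σ; omega) (fun s => u ^ s)]
  apply Finset.sum_congr rfl
  intro s _
  have hc := main_count n s
  unfold cntR cntP at hc
  rw [hc]
/-- number of rooks in the block of columns `2v, 2v+1` -/
noncomputable def bR {n : ℕ} (R : RookPlacement n) (v : ℕ) : ℕ :=
  (Finset.univ.filter fun j : Fin n => (R.1 j).val / 2 = v).card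

lemma blockRooks_eq_bR {n : ℕ} (R : RookPlacement n) (i : Fin n) :
    blockRooks R i = bR R i.val := by
  unfold blockRooks bR
  congr 1

lemma bR_le_two {n : ℕ} (R : RookPlacement n) (v : ℕ) : bR R v ≤ 2 := by
  unfold bR
  have h : ∀ j ∈ (Finset.univ.filter fun j : Fin n => (R.1 j).val / 2 = v),
      (R.1 j).val ∈ ({2*v, 2*v+1} : Finset ℕ) := by
    intro j hj
    simp only [Finset.mem_filter] at hj
    simp only [Finset.mem_insert, Finset.mem_singleton]
    omega
  calc (Finset.univ.filter fun j : Fin n => (R.1 j).val / 2 = v).card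
      ≤ ({2*v, 2*v+1} : Finset ℕ).card := by
        apply Finset.card_le_card_of_injOn (fun j => (R.1 j).val) h
        intro j1 _ j2 _ hval
        exact R.2.1 (Fin.ext hval)
  _ ≤ 2 := le_trans (Finset.card_insert_le _ _) (by simp)

lemma bR_pos {n : ℕ} (R : RookPlacement n) (j : Fin n) : 1 ≤ bR R ((R.1 j).val / 2) := by
  rw [Nat.succ_le_iff]
  apply Finset.card_pos.mpr
  exact ⟨j, Finset.mem_filter.mpr ⟨Finset.mem_univ _, rfl⟩⟩

lemma bR_one_unique {n : ℕ} (R : RookPlacement n) {v : ℕ} (h : bR R v = 1)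
    {j1 j2 : Fin n} (h1 : (R.1 j1).val / 2 = v) (h2 : (R.1 j2).val / 2 = v) : j1 = j2 := by
  obtain ⟨a, ha⟩ := Finset.card_eq_one.mp h
  have m1 : j1 ∈ (Finset.univ.filter fun j : Fin n => (R.1 j).val / 2 = v) :=
    Finset.mem_filter.mpr ⟨Finset.mem_univ _, h1⟩
  have m2 : j2 ∈ (Finset.univ.filter fun j : Fin n => (R.1 j).val / 2 = v) :=
    Finset.mem_filter.mpr ⟨Finset.mem_univ _, h2⟩
  rw [ha, Finset.mem_singleton] at m1 m2
  rw [m1, m2]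

lemma newcol_inj {n : ℕ} (R : RookPlacement n) (f : Fin n → ℕ)
    (hdiv : ∀ j, f j / 2 = (R.1 j).val / 2)
    (hsame : ∀ j, bR R ((R.1 j).val / 2) ≠ 1 → f j = (R.1 j).val)
    {j1 j2 : Fin n} (h : f j1 = f j2) : j1 = j2 := by
  have hb : (R.1 j1).val / 2 = (R.1 j2).val / 2 := by
    rw [← hdiv j1, ← hdiv j2, h]
  by_cases hone : bR R ((R.1 j1).val / 2) = 1
  · exact bR_one_unique R hone rfl hb.symm
  · have e1 := hsame j1 hone
    have e2 := hsame j2 (by rw [← hb]; exact hone)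
    exact R.2.1 (Fin.ext (by rw [← e1, ← e2, h]))

/-- column of row `j` after pulling lone right rooks to the left -/
noncomputable def pullCol {n : ℕ} (R : RookPlacement n) (j : Fin n) : ℕ :=
  if (R.1 j).val % 2 = 1 ∧ bR R ((R.1 j).val / 2) = 1
    then (R.1 j).val - 1 else (R.1 j).val

lemma pullCol_div {n : ℕ} (R : RookPlacement n) (j : Fin n) :
    pullCol R j / 2 = (R.1 j).val / 2 := by
  unfold pullCol
  split <;> omega

lemma pullCol_le {n : ℕ} (R : RookPlacement n) (j : Fin n) :
    pullCol R j ≤ (R.1 j).val := by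
  unfold pullCol
  split <;> omega

lemma pullCol_same {n : ℕ} (R : RookPlacement n) (j : Fin n)
    (h : bR R ((R.1 j).val / 2) ≠ 1) : pullCol R j = (R.1 j).val := by
  unfold pullCol
  rw [if_neg (by tauto)]

/-- the left-aligned normalization of a rook placement -/
noncomputable def pull {n : ℕ} (R : RookPlacement n) : RookPlacement n :=
  ⟨fun j => ⟨pullCol R j, by
      have h1 := pullCol_le R j
      have h2 := (R.1 j).isLt
      omega⟩,
   fun a b h => newcol_inj R (pullCol R) (pullCol_div R) (pullCol_same R)
     (by simpa using congrArg Fin.val h),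
   fun j => by
     have h1 := pullCol_le R j
     have h2 := R.2.2 j
     simp only [Fin.val_mk]
     omega⟩

@[simp] lemma pull_apply {n : ℕ} (R : RookPlacement n) (j : Fin n) :
    ((pull R).1 j).val = pullCol R j := rfl

lemma bR_pull {n : ℕ} (R : RookPlacement n) (v : ℕ) : bR (pull R) v = bR R v := by
  unfold bR
  congr 1
  ext j
  simp only [Finset.mem_filter, Finset.mem_univ, true_and, pull_apply, pullCol_div]

lemma la_pull {n : ℕ} (R : RookPlacement n) : LeftAligned (pull R) := by
  intro i hocc
  obtain ⟨j, hj⟩ := hocc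
  rw [pull_apply] at hj
  have hcj : (R.1 j).val = 2 * i.val + 1 := by
    unfold pullCol at hj
    split at hj <;> omega
  have hbne : bR R ((R.1 j).val / 2) ≠ 1 := by
    intro h1
    unfold pullCol at hj
    rw [if_pos ⟨by omega, h1⟩] at hj
    omega
  have hdvd : (R.1 j).val / 2 = i.val := by omega
  have hb2 : bR R i.val = 2 := by
    have h1 := bR_le_two R i.val
    have h2 := bR_pos R j
    have h3 := hbne
    rw [hdvd] at h2 h3
    omega
  have hcard : 1 < (Finset.univ.filter fun k : Fin n => (R.1 k).val / 2 = i.val).card := by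
    unfold bR at hb2
    omega
  obtain ⟨k, hk, hkj⟩ := Finset.exists_mem_ne hcard j
  simp only [Finset.mem_filter, Finset.mem_univ, true_and] at hk
  have hne : (R.1 k).val ≠ (R.1 j).val := fun he => hkj (R.2.1 (Fin.ext he))
  have hck : (R.1 k).val = 2 * i.val := by omega
  refine ⟨k, ?_⟩
  rw [pull_apply, pullCol_same R k (by
    rw [show (R.1 k).val / 2 = i.val by omega]
    omega)]
  exact hck
lemma la_col_even {n : ℕ} {R : RookPlacement n} (hLA : LeftAligned R) (j : Fin n)
    (h1 : bR R ((R.1 j).val / 2) = 1) : (R.1 j).val % 2 = 0 := by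
  by_contra hodd
  have hc := (R.1 j).isLt
  have hb : (R.1 j).val / 2 < n := by omega
  have hocc : Occupied R (2 * (⟨(R.1 j).val / 2, hb⟩ : Fin n).val + 1) :=
    ⟨j, by simp only [Fin.val_mk]; omega⟩
  obtain ⟨k, hk⟩ := hLA _ hocc
  simp only [Fin.val_mk] at hk
  have hkb : (R.1 k).val / 2 = (R.1 j).val / 2 := by omega
  have := bR_one_unique R h1 hkb rfl
  subst this
  omega

/-- column of row `j` after pushing the lone rooks of blocks in `S` to the right -/
noncomputable def pushCol {n : ℕ} (R : RookPlacement n) (S : Finset (Fin n)) (j : Fin n) : ℕ :=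
  if (R.1 j).val % 2 = 0 ∧ bR R ((R.1 j).val / 2) = 1 ∧ ∃ i ∈ S, i.val = (R.1 j).val / 2
    then (R.1 j).val + 1 else (R.1 j).val

lemma pushCol_div {n : ℕ} (R : RookPlacement n) (S : Finset (Fin n)) (j : Fin n) :
    pushCol R S j / 2 = (R.1 j).val / 2 := by
  unfold pushCol
  split <;> omega

lemma pushCol_lt {n : ℕ} (R : RookPlacement n) (S : Finset (Fin n)) (j : Fin n) :
    pushCol R S j < 2 * (j.val + 1) := by
  have h2 := R.2.2 j
  unfold pushCol
  split <;> omega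

lemma pushCol_same {n : ℕ} (R : RookPlacement n) (S : Finset (Fin n)) (j : Fin n)
    (h : bR R ((R.1 j).val / 2) ≠ 1) : pushCol R S j = (R.1 j).val := by
  unfold pushCol
  rw [if_neg (by tauto)]

noncomputable def push {n : ℕ} (R : RookPlacement n) (S : Finset (Fin n)) : RookPlacement n :=
  ⟨fun j => ⟨pushCol R S j, by
      have h1 := pushCol_lt R S j
      have h2 := j.isLt
      omega⟩,
   fun a b h => newcol_inj R (pushCol R S) (pushCol_div R S) (pushCol_same R S)
     (by simpa using congrArg Fin.val h),
   fun j => by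
     simp only [Fin.val_mk]
     exact pushCol_lt R S j⟩

@[simp] lemma push_apply {n : ℕ} (R : RookPlacement n) (S : Finset (Fin n)) (j : Fin n) :
    ((push R S).1 j).val = pushCol R S j := rfl

lemma bR_push {n : ℕ} (R : RookPlacement n) (S : Finset (Fin n)) (v : ℕ) :
    bR (push R S) v = bR R v := by
  unfold bR
  congr 1
  ext j
  simp only [Finset.mem_filter, Finset.mem_univ, true_and, push_apply, pushCol_div]

/-- the blocks whose lone rook sits in the right column -/
noncomputable def Sof {n : ℕ} (R : RookPlacement n) : Finset (Fin n) :=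
  Finset.univ.filter fun i : Fin n => bR R i.val = 1 ∧ Occupied R (2 * i.val + 1)

/-- the singleton blocks -/
noncomputable def singles {n : ℕ} (R : RookPlacement n) : Finset (Fin n) :=
  Finset.univ.filter fun i : Fin n => blockRooks R i = 1

lemma Sof_subset_singles_pull {n : ℕ} (R : RookPlacement n) : Sof R ⊆ singles (pull R) := by
  intro i hi
  simp only [Sof, Finset.mem_filter, Finset.mem_univ, true_and] at hi
  simp only [singles, Finset.mem_filter, Finset.mem_univ, true_and]
  rw [blockRooks_eq_bR, bR_pull]
  exact hi.1

lemma pull_push {n : ℕ} {R : RookPlacement n} (hLA : LeftAligned R) (S : Finset (Fin n)) :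
    pull (push R S) = R := by
  apply Subtype.ext
  funext j
  apply Fin.ext
  simp only [pull_apply]
  set c := (R.1 j).val with hc
  by_cases hcond : (R.1 j).val % 2 = 0 ∧ bR R ((R.1 j).val / 2) = 1
      ∧ ∃ i ∈ S, i.val = (R.1 j).val / 2
  · have hpush : ((push R S).1 j).val = c + 1 := by
      rw [push_apply]
      unfold pushCol
      rw [if_pos hcond]
    unfold pullCol
    rw [hpush]
    rw [if_pos ?side]
    case side =>
      constructor
      · omega
      · rw [bR_push]
        have : (c + 1) / 2 = c / 2 := by omega
        rw [this]
        exact hcond.2.1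
    omega
  · have hpush : ((push R S).1 j).val = c := by
      rw [push_apply]
      unfold pushCol
      rw [if_neg hcond]
    unfold pullCol
    rw [hpush]
    rw [if_neg ?side]
    case side =>
      rintro ⟨hodd, hbone⟩
      rw [bR_push] at hbone
      exact absurd (la_col_even hLA j hbone) (by omega)

lemma push_pull {n : ℕ} (R : RookPlacement n) : push (pull R) (Sof R) = R := by
  apply Subtype.ext
  funext j
  apply Fin.ext
  simp only [push_apply]
  set c := (R.1 j).val with hc
  have hclt := (R.1 j).isLt
  by_cases hcond : c % 2 = 1 ∧ bR R (c / 2) = 1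
  · have hq : ((pull R).1 j).val = c - 1 := by
      rw [pull_apply]
      unfold pullCol
      rw [if_pos hcond]
    unfold pushCol
    rw [hq, bR_pull]
    rw [if_pos ?side]
    case side =>
      refine ⟨by omega, ?_, ?_⟩
      · rw [show (c-1)/2 = c/2 by omega]
        exact hcond.2
      · refine ⟨⟨c / 2, by omega⟩, ?_, by simp only [Fin.val_mk]; omega⟩
        simp only [Sof, Finset.mem_filter, Finset.mem_univ, true_and, Fin.val_mk]
        exact ⟨hcond.2, ⟨j, by omega⟩⟩
    omega
  · have hq : ((pull R).1 j).val = c := by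
      rw [pull_apply]
      unfold pullCol
      rw [if_neg hcond]
    unfold pushCol
    rw [hq, bR_pull]
    rw [if_neg ?side]
    case side =>
      rintro ⟨heven, hbone, i, hiS, hiv⟩
      simp only [Sof, Finset.mem_filter, Finset.mem_univ, true_and] at hiS
      obtain ⟨hb1, k, hk⟩ := hiS
      have hkb : (R.1 k).val / 2 = c / 2 := by omega
      have := bR_one_unique R hbone hkb rfl
      subst this
      omega

lemma Sof_push {n : ℕ} {R : RookPlacement n} (hLA : LeftAligned R) {S : Finset (Fin n)}
    (hS : S ⊆ singles R) : Sof (push R S) = S := by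
  ext i
  simp only [Sof, Finset.mem_filter, Finset.mem_univ, true_and, bR_push]
  constructor
  · rintro ⟨hb1, j, hj⟩
    rw [push_apply] at hj
    by_cases hcond : (R.1 j).val % 2 = 0 ∧ bR R ((R.1 j).val / 2) = 1
        ∧ ∃ i' ∈ S, i'.val = (R.1 j).val / 2
    · have : pushCol R S j = (R.1 j).val + 1 := by
        unfold pushCol; rw [if_pos hcond]
      obtain ⟨i', hi'S, hi'v⟩ := hcond.2.2
      have : i' = i := Fin.ext (by omega)
      rwa [← this]
    · have hsame : pushCol R S j = (R.1 j).val := by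
        unfold pushCol; rw [if_neg hcond]
      have hodd : (R.1 j).val = 2 * i.val + 1 := by omega
      have heq : (R.1 j).val / 2 = i.val := by omega
      have := la_col_even hLA j (by rw [heq]; exact hb1)
      omega
  · intro hiS
    have hb1 : bR R i.val = 1 := by
      have := hS hiS
      simp only [singles, Finset.mem_filter, Finset.mem_univ, true_and,
        blockRooks_eq_bR] at this
      exact this
    refine ⟨hb1, ?_⟩
    obtain ⟨a, ha⟩ := Finset.card_eq_one.mp hb1
    have haf : a ∈ (Finset.univ.filter fun j : Fin n => (R.1 j).val / 2 = i.val) := by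
      rw [ha]; exact Finset.mem_singleton_self a
    simp only [Finset.mem_filter, Finset.mem_univ, true_and] at haf
    have heva := la_col_even hLA a (by rw [haf]; exact hb1)
    have hca : (R.1 a).val = 2 * i.val := by omega
    refine ⟨a, ?_⟩
    rw [push_apply]
    unfold pushCol
    rw [if_pos ⟨heva, by rw [haf]; exact hb1, ⟨i, hiS, by omega⟩⟩]
    omega
noncomputable def twoC {n : ℕ} (R : RookPlacement n) : ℕ :=
  (Finset.univ.filter fun i : Fin n => blockRooks R i = 2).card

lemma twoC_pull {n : ℕ} (R : RookPlacement n) : twoC (pull R) = twoC R := by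
  unfold twoC
  congr 1
  ext i
  simp only [Finset.mem_filter, Finset.mem_univ, true_and, blockRooks_eq_bR, bR_pull]

lemma oddC_eq {n : ℕ} (R : RookPlacement n) : oddC R = twoC R + (Sof R).card := by
  have hsplit := Finset.card_filter_add_card_filter_not
    (s := Finset.univ.filter fun j : Fin n => (R.1 j).val % 2 = 1)
    (p := fun j => bR R ((R.1 j).val / 2) = 1)
  rw [Finset.filter_filter, Finset.filter_filter] at hsplit
  have h1 : (Finset.univ.filter fun j : Fin n =>
      (R.1 j).val % 2 = 1 ∧ bR R ((R.1 j).val / 2) = 1).card = (Sof R).card := by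
    apply Finset.card_bij
      (fun j _ => (⟨(R.1 j).val / 2, by have := (R.1 j).isLt; omega⟩ : Fin n))
    · intro j hj
      simp only [Finset.mem_filter, Finset.mem_univ, true_and] at hj
      simp only [Sof, Finset.mem_filter, Finset.mem_univ, true_and, Fin.val_mk]
      exact ⟨hj.2, ⟨j, by omega⟩⟩
    · intro j1 hj1 j2 hj2 h
      simp only [Finset.mem_filter, Finset.mem_univ, true_and] at hj1 hj2
      have hv := congrArg Fin.val h
      simp only [Fin.val_mk] at hv
      exact bR_one_unique R hj1.2 rfl hv.symm
    · intro i hi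
      simp only [Sof, Finset.mem_filter, Finset.mem_univ, true_and] at hi
      obtain ⟨hb1, j, hj⟩ := hi
      refine ⟨j, ?_, ?_⟩
      · simp only [Finset.mem_filter, Finset.mem_univ, true_and]
        refine ⟨by omega, ?_⟩
        rw [show (R.1 j).val / 2 = i.val by omega]
        exact hb1
      · exact Fin.ext (by simp only [Fin.val_mk]; omega)
  have h2 : (Finset.univ.filter fun j : Fin n =>
      (R.1 j).val % 2 = 1 ∧ ¬ bR R ((R.1 j).val / 2) = 1).card = twoC R := by
    unfold twoC
    apply Finset.card_bij
      (fun j _ => (⟨(R.1 j).val / 2, by have := (R.1 j).isLt; omega⟩ : Fin n))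
    · intro j hj
      simp only [Finset.mem_filter, Finset.mem_univ, true_and] at hj
      simp only [Finset.mem_filter, Finset.mem_univ, true_and, blockRooks_eq_bR, Fin.val_mk]
      have ha := bR_le_two R ((R.1 j).val / 2)
      have hb := bR_pos R j
      omega
    · intro j1 hj1 j2 hj2 h
      simp only [Finset.mem_filter, Finset.mem_univ, true_and] at hj1 hj2
      have hv := congrArg Fin.val h
      simp only [Fin.val_mk] at hv
      have : (R.1 j1).val = (R.1 j2).val := by omega
      exact R.2.1 (Fin.ext this)
    · intro i hi
      simp only [Finset.mem_filter, Finset.mem_univ, true_and, blockRooks_eq_bR] at hi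
      have hcard : 1 < (Finset.univ.filter fun k : Fin n => (R.1 k).val / 2 = i.val).card := by
        unfold bR at hi
        omega
      obtain ⟨a, ha, b, hb, hab⟩ := Finset.one_lt_card.mp hcard
      simp only [Finset.mem_filter, Finset.mem_univ, true_and] at ha hb
      have hne : (R.1 a).val ≠ (R.1 b).val := fun he => hab (R.2.1 (Fin.ext he))
      by_cases hodd : (R.1 a).val % 2 = 1
      · refine ⟨a, ?_, Fin.ext (by simp only [Fin.val_mk]; omega)⟩
        simp only [Finset.mem_filter, Finset.mem_univ, true_and]
        refine ⟨hodd, ?_⟩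
        rw [ha]
        omega
      · refine ⟨b, ?_, Fin.ext (by simp only [Fin.val_mk]; omega)⟩
        simp only [Finset.mem_filter, Finset.mem_univ, true_and]
        refine ⟨by omega, ?_⟩
        rw [hb]
        omega
  unfold oddC
  omega

lemma sum_bR {n : ℕ} (R : RookPlacement n) : ∑ i : Fin n, bR R i.val = n := by
  have h := Finset.card_eq_sum_card_fiberwise
    (s := (Finset.univ : Finset (Fin n))) (t := (Finset.univ : Finset (Fin n)))
    (f := fun j : Fin n => (⟨(R.1 j).val / 2, by have := (R.1 j).isLt; omega⟩ : Fin n))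
    (fun x _ => Finset.mem_univ _)
  simp only [Finset.card_univ, Fintype.card_fin] at h
  have h2 : ∀ i : Fin n, bR R i.val
      = (Finset.univ.filter fun j : Fin n =>
          (⟨(R.1 j).val / 2, by have := (R.1 j).isLt; omega⟩ : Fin n) = i).card := by
    intro i
    unfold bR
    congr 1
    ext j
    simp only [Finset.mem_filter, Finset.mem_univ, true_and, Fin.ext_iff, Fin.val_mk]
  rw [Finset.sum_congr rfl (fun i _ => h2 i)]
  exact h.symm

lemma two_bor {n : ℕ} (R : RookPlacement n) : 2 * twoC R + bor R = n := by
  have h := sum_bR R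
  have hpt : ∀ i : Fin n, bR R i.val =
      2 * (if blockRooks R i = 2 then 1 else 0) + (if blockRooks R i = 1 then 1 else 0) := by
    intro i
    have h1 := bR_le_two R i.val
    rw [blockRooks_eq_bR]
    split_ifs <;> omega
  rw [Finset.sum_congr rfl (fun i _ => hpt i), Finset.sum_add_distrib, ← Finset.mul_sum] at h
  rw [← Finset.card_filter, ← Finset.card_filter] at h
  unfold twoC
  unfold bor at *
  omega

lemma bor_singles {n : ℕ} (R : RookPlacement n) : bor R = (singles R).card := by
  unfold bor singles
  congr 1

lemma pow_sum_powerset {M ι : Type*} [CommSemiring M] [DecidableEq ι] (u : M)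
    (A : Finset ι) (t : ℕ) :
    ∑ S ∈ A.powerset, u ^ (t + S.card) = u ^ t * (u + 1) ^ A.card := by
  have hp := Finset.prod_add (fun _ : ι => u) (fun _ : ι => 1) A
  simp only [Finset.prod_const, Finset.prod_const_one, one_pow, mul_one] at hp
  calc ∑ S ∈ A.powerset, u ^ (t + S.card) = ∑ S ∈ A.powerset, u ^ t * u ^ S.card := by
        apply Finset.sum_congr rfl
        intro S _
        rw [pow_add]
  _ = u ^ t * ∑ S ∈ A.powerset, u ^ S.card := by rw [Finset.mul_sum]
  _ = u ^ t * (u + 1) ^ A.card := by rw [← hp]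

lemma G2 {M : Type*} [CommSemiring M] (n : ℕ) (u : M) :
    ∑ R : RookPlacement n, u ^ oddC R
      = ∑ R' : {R : RookPlacement n // LeftAligned R},
          u ^ twoC R'.1 * (u + 1) ^ bor R'.1 := by
  rw [← Finset.sum_fiberwise_of_maps_to
    (g := fun R : RookPlacement n =>
      (⟨pull R, la_pull R⟩ : {R : RookPlacement n // LeftAligned R}))
    (t := Finset.univ)
    (fun x _ => Finset.mem_univ _) (fun R : RookPlacement n => u ^ oddC R)]
  apply Finset.sum_congr rfl
  intro y _
  have hsum : ∑ R ∈ Finset.univ.filter (fun R : RookPlacement n =>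
        (⟨pull R, la_pull R⟩ : {R : RookPlacement n // LeftAligned R}) = y), u ^ oddC R
      = ∑ S ∈ (singles y.1).powerset, u ^ (twoC y.1 + S.card) := by
    apply Finset.sum_nbij' (i := fun R => Sof R) (j := fun S => push y.1 S)
    · intro R hR
      simp only [Finset.mem_filter, Finset.mem_univ, true_and] at hR
      rw [Finset.mem_powerset]
      have hy : pull R = y.1 := congrArg Subtype.val hR
      rw [← hy]
      exact Sof_subset_singles_pull R
    · intro S hS
      simp only [Finset.mem_filter, Finset.mem_univ, true_and]
      exact Subtype.ext (pull_push y.2 S)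
    · intro R hR
      simp only [Finset.mem_filter, Finset.mem_univ, true_and] at hR
      have hy : pull R = y.1 := congrArg Subtype.val hR
      rw [← hy]
      exact push_pull R
    · intro S hS
      rw [Finset.mem_powerset] at hS
      exact Sof_push y.2 hS
    · intro R hR
      simp only [Finset.mem_filter, Finset.mem_univ, true_and] at hR
      have hy : pull R = y.1 := congrArg Subtype.val hR
      rw [oddC_eq R]
      congr 2
      rw [← hy, twoC_pull]
  rw [hsum, pow_sum_powerset, bor_singles]
lemma twoC_le {n : ℕ} (R : RookPlacement n) : twoC R ≤ n / 2 := by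
  have := two_bor R
  omega

lemma G1 {M : Type*} [CommSemiring M] (n : ℕ) (u : M) :
    ∑ R' : {R : RookPlacement n // LeftAligned R}, u ^ twoC R'.1 * (u + 1) ^ bor R'.1
      = ∑ k ∈ Finset.range (n / 2 + 1),
          (Nat.card {R : RookPlacement n // LeftAligned R ∧ bor R = n - 2 * k} : M)
            * u ^ k * (u + 1) ^ (n - 2 * k) := by
  have hpt : ∀ R' : {R : RookPlacement n // LeftAligned R},
      u ^ twoC R'.1 * (u + 1) ^ bor R'.1
        = u ^ twoC R'.1 * (u + 1) ^ (n - 2 * twoC R'.1) := by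
    intro R'
    have hb : bor R'.1 = n - 2 * twoC R'.1 := by
      have := two_bor R'.1
      omega
    rw [hb]
  rw [Finset.sum_congr rfl (fun R' _ => hpt R')]
  rw [sum_stat (fun R' : {R : RookPlacement n // LeftAligned R} => twoC R'.1) (n / 2)
    (fun R' => twoC_le R'.1) (fun k => u ^ k * (u + 1) ^ (n - 2 * k))]
  apply Finset.sum_congr rfl
  intro k hk
  rw [Finset.mem_range] at hk
  have hcard : (Finset.univ.filter fun R' : {R : RookPlacement n // LeftAligned R} =>
        twoC R'.1 = k).card
      = Nat.card {R : RookPlacement n // LeftAligned R ∧ bor R = n - 2 * k} := by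
    rw [Nat.card_eq_fintype_card, Fintype.card_subtype]
    apply Finset.card_bij (fun R' _ => R'.1)
    · intro R' hR'
      simp only [Finset.mem_filter, Finset.mem_univ, true_and] at hR' ⊢
      refine ⟨R'.2, ?_⟩
      have := two_bor R'.1
      omega
    · intro a _ b _ h
      exact Subtype.ext h
    · intro R hR
      simp only [Finset.mem_filter, Finset.mem_univ, true_and] at hR
      refine ⟨⟨R, hR.1⟩, ?_, rfl⟩
      simp only [Finset.mem_filter, Finset.mem_univ, true_and]
      have := two_bor R
      omega
  rw [nsmul_eq_mul, hcard, ← mul_assoc]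

end Work

open Polynomial in
/-- With `p_n(x) = Σ_T x^{bor T}` (sum over left-aligned rook placements `T`
on `2δ_n`) and `S_{n+1}(x) = Σ_{σ ∈ S_{n+1}} x^{des σ}` the `(n+1)`-st
Eulerian polynomial, one has `x^{n/2} · p_n((x+1)/√x) = S_{n+1}(x)`;
equivalently, writing `p_n(x) = Σ_k a_{n,k} x^{n-2k}` where `a_{n,k}` is the
number of left-aligned rook placements with `bor = n - 2k`,
`S_{n+1}(x) = Σ_k a_{n,k} x^k (x+1)^{n-2k}`. -/
theorem eulerian_eq_left_aligned_gamma_expansion (n : ℕ) :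
    (∀ x : ℝ, 0 < x →
      x ^ ((n : ℝ) / 2) *
          (∑ R : {R : RookPlacement n // LeftAligned R},
            ((x + 1) / Real.sqrt x) ^ bor R.1) =
        ∑ σ : Equiv.Perm (Fin (n + 1)), x ^ desCount σ) ∧
    (∑ σ : Equiv.Perm (Fin (n + 1)), (X : Polynomial ℤ) ^ desCount σ) =
      ∑ k ∈ Finset.range (n / 2 + 1),
        Polynomial.C
            ((Nat.card {R : RookPlacement n // LeftAligned R ∧ bor R = n - 2 * k} : ℤ)) *
          X ^ k * (X + 1) ^ (n - 2 * k) := by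
  
  constructor
  · intro x hx
    have hsq : Real.sqrt x ≠ 0 := ne_of_gt (Real.sqrt_pos.mpr hx)
    have hpow : x ^ ((n : ℝ) / 2) = Real.sqrt x ^ n := by
      rw [Real.sqrt_eq_rpow, ← Real.rpow_natCast (x ^ ((1:ℝ)/2)) n, ← Real.rpow_mul hx.le]
      congr 1
      push_cast
      ring
    rw [Finset.mul_sum]
    have hpt : ∀ R' : {R : RookPlacement n // LeftAligned R},
        x ^ ((n : ℝ) / 2) * ((x + 1) / Real.sqrt x) ^ bor R'.1
          = x ^ Work.twoC R'.1 * (x + 1) ^ bor R'.1 := by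
      intro R'
      have hb := Work.two_bor R'.1
      have key : ∀ t b : ℕ, 2 * t + b = n → Real.sqrt x ^ n = x ^ t * Real.sqrt x ^ b := by
        intro t b htb
        rw [← htb, pow_add, pow_mul, Real.sq_sqrt hx.le]
      have hsplit := key _ _ hb
      rw [hpow, hsplit, div_pow]
      field_simp
    rw [Finset.sum_congr rfl (fun R' _ => hpt R'), ← Work.G2 n x, Work.G3 n x]
  · rw [← Work.G3 (M := Polynomial ℤ) n Polynomial.X, Work.G2 n Polynomial.X,
      Work.G1 n Polynomial.X]
    apply Finset.sum_congr rfl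
    intro k _
    rw [map_natCast (Polynomial.C : ℤ →+* Polynomial ℤ)]
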